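/- Suppose f is twice continuously differentiable, X ∈ S_{n,p} satisfies grad f(X) = 0, and the Hessian of g at X has operator norm at most M₂. Define the Riemannian Hessian hess f(X) : T_X → T_X by hess f(X)[D] := P_X( Hf(X)[D] − D·Φ(Xᵀ∇f(X)) ), where P_X(W) := W − X·Φ(Xᵀ·W). Then: (i) if σ ∈ ℝ and D ∈ T_X with D ≠ 0 satisfy hess f(X)[D] = σ·D, then Hh(X)[D] = σ·D, so σ is an eigenvalue of Hh(X); (ii) conversely, if σ ∈ ℝ admits D ∈ ℝ^{n×p}, D ≠ 0, with Hh(X)[D] = σ·D, then either there exists a nonzero D' ∈ T_X with hess f(X)[D'] = σ·D', or σ ≥ 2β − M₂. -/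

import Mathlib

open Matrix

attribute [local instance] Matrix.frobeniusNormedAddCommGroup Matrix.frobeniusNormedSpace

/-- The old Mathlib (Dec 2024) `Matrix.PosSemidef.sqrt`, removed since; restored verbatim. -/
noncomputable def Matrix.PosSemidef.sqrt {n 𝕜 : Type*} [Fintype n] [RCLike 𝕜] [PartialOrder 𝕜] [DecidableEq n]
    {A : Matrix n n 𝕜} (hA : A.PosSemidef) : Matrix n n 𝕜 :=
  hA.1.eigenvectorUnitary.1 * diagonal ((↑) ∘ Real.sqrt ∘ hA.1.eigenvalues) *
  (star hA.1.eigenvectorUnitary : Matrix n n 𝕜)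

namespace ExPen

noncomputable def finner {n p : ℕ} (A B : Matrix (Fin n) (Fin p) ℝ) : ℝ := (Aᵀ * B).trace

noncomputable def Phi {p : ℕ} (M : Matrix (Fin p) (Fin p) ℝ) : Matrix (Fin p) (Fin p) ℝ :=
  (1 / 2 : ℝ) • (M + Mᵀ)

noncomputable def Amap {n p : ℕ} (X : Matrix (Fin n) (Fin p) ℝ) : Matrix (Fin p) (Fin p) ℝ :=
  (3 / 2 : ℝ) • (1 : Matrix (Fin p) (Fin p) ℝ) - (1 / 2 : ℝ) • (Xᵀ * X)

noncomputable def g {n p : ℕ} (f : Matrix (Fin n) (Fin p) ℝ → ℝ)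
    (X : Matrix (Fin n) (Fin p) ℝ) : ℝ := f (X * Amap X)

noncomputable def hpen {n p : ℕ} (f : Matrix (Fin n) (Fin p) ℝ → ℝ) (β : ℝ)
    (X : Matrix (Fin n) (Fin p) ℝ) : ℝ := g f X + β / 4 * ‖Xᵀ * X - 1‖ ^ 2

noncomputable def dualCLM {n p : ℕ} (G : Matrix (Fin n) (Fin p) ℝ) :
    Matrix (Fin n) (Fin p) ℝ →L[ℝ] ℝ :=
  LinearMap.toContinuousLinearMap
    { toFun := fun D => (Gᵀ * D).trace
      map_add' := by intro D E; simp [Matrix.mul_add]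
      map_smul' := by intro c D; simp [Matrix.mul_smul] }

def HasGradAt {n p : ℕ} (φ : Matrix (Fin n) (Fin p) ℝ → ℝ)
    (X G : Matrix (Fin n) (Fin p) ℝ) : Prop :=
  HasFDerivAt φ (dualCLM G) X

noncomputable def specNorm {n p : ℕ} (X : Matrix (Fin n) (Fin p) ℝ) : ℝ :=
  ‖LinearMap.toContinuousLinearMap
    (Matrix.toEuclideanLin X : EuclideanSpace ℝ (Fin p) →ₗ[ℝ] EuclideanSpace ℝ (Fin n))‖

lemma posSemidef_tmul {n p : ℕ} (X : Matrix (Fin n) (Fin p) ℝ) : (Xᵀ * X).PosSemidef := by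
  simpa [Matrix.conjTranspose_eq_transpose_of_trivial] using
    Matrix.posSemidef_conjTranspose_mul_self X

noncomputable def Pst {n p : ℕ} (X : Matrix (Fin n) (Fin p) ℝ) : Matrix (Fin n) (Fin p) ℝ :=
  X * ((posSemidef_tmul X).sqrt)⁻¹



variable {E : Type*} [NormedAddCommGroup E] [NormedSpace ℝ E]
variable {a b c d n p : ℕ}

noncomputable def mulCLM (a b c : ℕ) :
    Matrix (Fin a) (Fin b) ℝ →L[ℝ] Matrix (Fin b) (Fin c) ℝ →L[ℝ] Matrix (Fin a) (Fin c) ℝ :=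
  LinearMap.toContinuousLinearMap
    ((LinearMap.toContinuousLinearMap :
        (Matrix (Fin b) (Fin c) ℝ →ₗ[ℝ] Matrix (Fin a) (Fin c) ℝ) ≃ₗ[ℝ] _).toLinearMap.comp
      (LinearMap.mk₂ ℝ (· * ·) Matrix.add_mul Matrix.smul_mul Matrix.mul_add (fun r A B => Matrix.mul_smul A r B)))

@[simp] lemma mulCLM_apply (A : Matrix (Fin a) (Fin b) ℝ) (B : Matrix (Fin b) (Fin c) ℝ) :
    mulCLM a b c A B = A * B := by simp [mulCLM]

noncomputable def mulDeriv {F : Type*} [TopologicalSpace F] [AddCommGroup F] [Module ℝ F]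
    (u' : F →L[ℝ] Matrix (Fin a) (Fin b) ℝ)
    (v' : F →L[ℝ] Matrix (Fin b) (Fin c) ℝ) (A : Matrix (Fin a) (Fin b) ℝ)
    (B : Matrix (Fin b) (Fin c) ℝ) : F →L[ℝ] Matrix (Fin a) (Fin c) ℝ :=
  let x : F →L[ℝ] Matrix (Fin a) (Fin c) ℝ := (mulCLM a b c A).comp v'
  let y : F →L[ℝ] Matrix (Fin a) (Fin c) ℝ := ((mulCLM a b c).flip B).comp u'
  x + y

@[simp] lemma mulDeriv_apply {F : Type*} [TopologicalSpace F] [AddCommGroup F] [Module ℝ F]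
    (u' : F →L[ℝ] Matrix (Fin a) (Fin b) ℝ)
    (v' : F →L[ℝ] Matrix (Fin b) (Fin c) ℝ) (A : Matrix (Fin a) (Fin b) ℝ)
    (B : Matrix (Fin b) (Fin c) ℝ) (e : F) :
    mulDeriv u' v' A B e = A * v' e + u' e * B := by
  change mulCLM a b c A (v' e) + (mulCLM a b c) (u' e) B = _
  simp

lemma _root_.HasFDerivAt.matmul {u : E → Matrix (Fin a) (Fin b) ℝ} {v : E → Matrix (Fin b) (Fin c) ℝ}
    {u' : E →L[ℝ] Matrix (Fin a) (Fin b) ℝ} {v' : E →L[ℝ] Matrix (Fin b) (Fin c) ℝ} {x : E}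
    (hu : HasFDerivAt u u' x) (hv : HasFDerivAt v v' x) :
    HasFDerivAt (fun y => u y * v y) (mulDeriv u' v' (u x) (v x)) x := by
  have h := (mulCLM a b c).hasFDerivAt_of_bilinear hu hv
  exact h


noncomputable def transCLM (a b : ℕ) : Matrix (Fin a) (Fin b) ℝ →L[ℝ] Matrix (Fin b) (Fin a) ℝ :=
  LinearMap.toContinuousLinearMap
  { toFun := fun A => Aᵀ
    map_add' := fun _ _ => Matrix.transpose_add _ _
    map_smul' := fun _ _ => Matrix.transpose_smul _ _ }

@[simp] lemma transCLM_apply (A : Matrix (Fin a) (Fin b) ℝ) : transCLM a b A = Aᵀ := by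
  simp [transCLM]

lemma _root_.HasFDerivAt.mtrans {u : E → Matrix (Fin a) (Fin b) ℝ}
    {u' : E →L[ℝ] Matrix (Fin a) (Fin b) ℝ} {x : E} (hu : HasFDerivAt u u' x) :
    HasFDerivAt (fun y => (u y)ᵀ) ((transCLM a b).comp u') x :=
  ((transCLM a b).hasFDerivAt.comp x hu : )

noncomputable def traceCLM (p : ℕ) : Matrix (Fin p) (Fin p) ℝ →L[ℝ] ℝ :=
  LinearMap.toContinuousLinearMap
  { toFun := fun A => A.trace
    map_add' := fun _ _ => Matrix.trace_add _ _
    map_smul' := by intros; simp }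

@[simp] lemma traceCLM_apply (A : Matrix (Fin p) (Fin p) ℝ) : traceCLM p A = A.trace := by
  simp [traceCLM]

variable {n p : ℕ}
lemma finner_eq_sum (A B : Matrix (Fin n) (Fin p) ℝ) :
    finner A B = ∑ i, ∑ j, A i j * B i j := by
  simp [finner, Matrix.trace, Matrix.diag, Matrix.mul_apply, Matrix.transpose_apply]
  rw [Finset.sum_comm]

lemma fnorm_sq (A : Matrix (Fin n) (Fin p) ℝ) : ‖A‖ ^ 2 = finner A A := by
  have h : ‖A‖ = Real.sqrt (∑ i, ∑ j, A i j ^ 2) := by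
    rw [Matrix.frobenius_norm_def, Real.sqrt_eq_rpow]
    congr 1
    refine Finset.sum_congr rfl fun i _ => Finset.sum_congr rfl fun j _ => ?_
    rw [show ((2:ℝ)) = ((2:ℕ):ℝ) by norm_num, Real.rpow_natCast]
    simp [sq_abs, Real.norm_eq_abs]
  rw [h, Real.sq_sqrt (by positivity), finner_eq_sum]
  simp [sq]

lemma finner_abs_le (A B : Matrix (Fin n) (Fin p) ℝ) : |finner A B| ≤ ‖A‖ * ‖B‖ := by
  have h2 : (finner A B) ^ 2 ≤ (finner A A) * (finner B B) := by
    rw [finner_eq_sum, finner_eq_sum, finner_eq_sum]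
    simp_rw [← Finset.sum_product', ← sq]
    exact Finset.sum_mul_sq_le_sq_mul_sq _ _ _
  rw [← fnorm_sq, ← fnorm_sq] at h2
  calc |finner A B| = Real.sqrt ((finner A B) ^ 2) := (Real.sqrt_sq_eq_abs _).symm
    _ ≤ Real.sqrt ((‖A‖ * ‖B‖) ^ 2) := Real.sqrt_le_sqrt (by rw [mul_pow]; exact h2)
    _ = ‖A‖ * ‖B‖ := Real.sqrt_sq (by positivity)

lemma eq_of_finner_eq (G₁ G₂ : Matrix (Fin n) (Fin p) ℝ)
    (h : ∀ D, finner G₁ D = finner G₂ D) : G₁ = G₂ := by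
  have h0 : finner (G₁ - G₂) (G₁ - G₂) = 0 := by
    have := h (G₁ - G₂)
    simp only [finner, Matrix.transpose_sub, Matrix.sub_mul] at this ⊢
    rw [Matrix.trace_sub]
    linarith
  have := fnorm_sq (G₁ - G₂)
  rw [h0] at this
  have : ‖G₁ - G₂‖ = 0 := by nlinarith [norm_nonneg (G₁ - G₂)]
  exact sub_eq_zero.mp (norm_eq_zero.mp this)


@[simp] lemma dualCLM_apply (G D : Matrix (Fin n) (Fin p) ℝ) :
    dualCLM G D = (Gᵀ * D).trace := by simp [dualCLM]

-- Phi lemmas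
lemma Phi_symm (M : Matrix (Fin p) (Fin p) ℝ) : (Phi M)ᵀ = Phi M := by
  simp [Phi, add_comm]

lemma Phi_of_symm {M : Matrix (Fin p) (Fin p) ℝ} (h : Mᵀ = M) : Phi M = M := by
  simp [Phi, h]; module

@[simp] lemma Phi_Phi (M : Matrix (Fin p) (Fin p) ℝ) : Phi (Phi M) = Phi M :=
  Phi_of_symm (Phi_symm M)

lemma Phi_transpose (M : Matrix (Fin p) (Fin p) ℝ) : Phi (Mᵀ) = (Phi M)ᵀ := by
  simp [Phi, add_comm]

@[simp] lemma Phi_zero : Phi (0 : Matrix (Fin p) (Fin p) ℝ) = 0 := by simp [Phi]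

lemma Phi_add (M N : Matrix (Fin p) (Fin p) ℝ) : Phi (M + N) = Phi M + Phi N := by
  simp [Phi, transpose_add]; module

lemma Phi_sub (M N : Matrix (Fin p) (Fin p) ℝ) : Phi (M - N) = Phi M - Phi N := by
  simp [Phi, transpose_sub]; module

lemma Phi_smul (r : ℝ) (M : Matrix (Fin p) (Fin p) ℝ) : Phi (r • M) = r • Phi M := by
  simp [Phi, transpose_smul, smul_add]; module

-- uniqueness of gradients
lemma HasGradAt.unique' {φ : Matrix (Fin n) (Fin p) ℝ → ℝ} {X G₁ G₂ : Matrix (Fin n) (Fin p) ℝ}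
    (h₁ : HasGradAt φ X G₁) (h₂ : HasGradAt φ X G₂) : G₁ = G₂ := by
  have h := h₁.unique h₂
  refine eq_of_finner_eq _ _ fun D => ?_
  have := congrFun (congrArg (fun (L : _ →L[ℝ] ℝ) => (L : _ → ℝ)) h) D
  simpa [finner] using this

variable {n p : ℕ}

lemma finner_mul_right {a b c : ℕ} (G : Matrix (Fin a) (Fin b) ℝ) (D : Matrix (Fin a) (Fin c) ℝ)
    (M : Matrix (Fin c) (Fin b) ℝ) : finner G (D * M) = finner (G * Mᵀ) D := by
  unfold finner
  rw [← Matrix.mul_assoc, Matrix.trace_mul_comm, ← Matrix.mul_assoc, Matrix.transpose_mul,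
    Matrix.transpose_transpose]

lemma finner_mul_left {a b c : ℕ} (G : Matrix (Fin a) (Fin b) ℝ) (A : Matrix (Fin a) (Fin c) ℝ)
    (W : Matrix (Fin c) (Fin b) ℝ) : finner G (A * W) = finner (Aᵀ * G) W := by
  unfold finner
  rw [Matrix.transpose_mul, Matrix.transpose_transpose, Matrix.mul_assoc]

lemma finner_transpose {a b : ℕ} (G D : Matrix (Fin a) (Fin b) ℝ) : finner Gᵀ Dᵀ = finner G D := by
  unfold finner
  rw [Matrix.transpose_transpose, ← Matrix.trace_transpose, Matrix.transpose_mul,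
    Matrix.transpose_transpose, Matrix.trace_mul_comm]

lemma finner_add_left {a b : ℕ} (G H D : Matrix (Fin a) (Fin b) ℝ) :
    finner (G + H) D = finner G D + finner H D := by
  simp [finner, Matrix.transpose_add, Matrix.add_mul]

lemma finner_smul_left {a b : ℕ} (r : ℝ) (G D : Matrix (Fin a) (Fin b) ℝ) :
    finner (r • G) D = r * finner G D := by
  simp [finner, Matrix.transpose_smul, Matrix.smul_mul]

lemma finner_sub_left {a b : ℕ} (G H D : Matrix (Fin a) (Fin b) ℝ) :
    finner (G - H) D = finner G D - finner H D := by
  simp [finner, Matrix.transpose_sub, Matrix.sub_mul]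

lemma finner_add_right {a b : ℕ} (G H D : Matrix (Fin a) (Fin b) ℝ) :
    finner D (G + H) = finner D G + finner D H := by
  simp [finner, Matrix.mul_add]

lemma finner_smul_right {a b : ℕ} (r : ℝ) (G D : Matrix (Fin a) (Fin b) ℝ) :
    finner D (r • G) = r * finner D G := by
  simp [finner, Matrix.mul_smul]

lemma finner_comm {a b : ℕ} (A B : Matrix (Fin a) (Fin b) ℝ) : finner A B = finner B A := by
  unfold finner
  rw [← Matrix.trace_transpose, Matrix.transpose_mul, Matrix.transpose_transpose,
    Matrix.trace_mul_comm]

lemma c_eq (Y : Matrix (Fin n) (Fin p) ℝ) :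
    Y * Amap Y = (3/2 : ℝ) • Y - (1/2 : ℝ) • (Y * (Yᵀ * Y)) := by
  unfold Amap
  rw [Matrix.mul_sub, Matrix.mul_smul, Matrix.mul_smul, Matrix.mul_one]

lemma hasFDerivAt_c (Y : Matrix (Fin n) (Fin p) ℝ) :
    HasFDerivAt (fun Z : Matrix (Fin n) (Fin p) ℝ => Z * Amap Z)
      ((3/2 : ℝ) • ContinuousLinearMap.id ℝ (Matrix (Fin n) (Fin p) ℝ) -
        (1/2 : ℝ) • mulDeriv (ContinuousLinearMap.id ℝ _)
          (mulDeriv ((transCLM n p).comp (ContinuousLinearMap.id ℝ _))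
            (ContinuousLinearMap.id ℝ _) Yᵀ Y) Y (Yᵀ * Y)) Y := by
  have h1 : HasFDerivAt (fun Z : Matrix (Fin n) (Fin p) ℝ => Z)
      (ContinuousLinearMap.id ℝ _) Y := hasFDerivAt_id Y
  have h2 := (h1.mtrans).matmul h1
  have h3 := h1.matmul h2
  have h4 := (h1.const_smul (3/2 : ℝ)).sub (h3.const_smul (1/2 : ℝ))
  have hfe : (fun Z : Matrix (Fin n) (Fin p) ℝ =>
      (3/2 : ℝ) • Z - (1/2 : ℝ) • (Z * (Zᵀ * Z))) = fun Z => Z * Amap Z := by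
    funext Z; rw [c_eq]
  rw [← hfe]
  exact h4

@[simp] lemma cderiv_apply (Y D : Matrix (Fin n) (Fin p) ℝ) :
    ((3/2 : ℝ) • ContinuousLinearMap.id ℝ (Matrix (Fin n) (Fin p) ℝ) -
        (1/2 : ℝ) • mulDeriv (ContinuousLinearMap.id ℝ _)
          (mulDeriv ((transCLM n p).comp (ContinuousLinearMap.id ℝ _))
            (ContinuousLinearMap.id ℝ _) Yᵀ Y) Y (Yᵀ * Y)) D
      = (3/2 : ℝ) • D - (1/2 : ℝ) • (Y * (Yᵀ * D + Dᵀ * Y) + D * (Yᵀ * Y)) := by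
  simp

lemma hasGradAt_g {f : Matrix (Fin n) (Fin p) ℝ → ℝ}
    {gradf : Matrix (Fin n) (Fin p) ℝ → Matrix (Fin n) (Fin p) ℝ}
    (hgradf : ∀ Y, HasGradAt f Y (gradf Y)) (Y : Matrix (Fin n) (Fin p) ℝ) :
    HasGradAt (g f) Y
      ((3/2 : ℝ) • gradf (Y * Amap Y) -
        (1/2 : ℝ) • (gradf (Y * Amap Y) * (Yᵀ * Y) +
          (Y * ((gradf (Y * Amap Y))ᵀ * Y) + Y * (Yᵀ * gradf (Y * Amap Y))))) := by
  have hc := hasFDerivAt_c Y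
  have hf' : HasFDerivAt f (dualCLM (gradf (Y * Amap Y))) (Y * Amap Y) := hgradf _
  have hg := hf'.comp Y hc
  have key : dualCLM ((3/2 : ℝ) • gradf (Y * Amap Y) -
      (1/2 : ℝ) • (gradf (Y * Amap Y) * (Yᵀ * Y) +
        (Y * ((gradf (Y * Amap Y))ᵀ * Y) + Y * (Yᵀ * gradf (Y * Amap Y))))) =
      (dualCLM (gradf (Y * Amap Y))).comp
        ((3/2 : ℝ) • ContinuousLinearMap.id ℝ (Matrix (Fin n) (Fin p) ℝ) -
          (1/2 : ℝ) • mulDeriv (ContinuousLinearMap.id ℝ _)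
            (mulDeriv ((transCLM n p).comp (ContinuousLinearMap.id ℝ _))
              (ContinuousLinearMap.id ℝ _) Yᵀ Y) Y (Yᵀ * Y)) := by
    ext D
    set G := gradf (Y * Amap Y) with hG
    have lhs : dualCLM ((3/2 : ℝ) • G - (1/2 : ℝ) • (G * (Yᵀ * Y) +
        (Y * (Gᵀ * Y) + Y * (Yᵀ * G)))) D
        = (3/2) * finner G D - (1/2) * (finner (G * (Yᵀ * Y)) D +
          (finner (Y * (Gᵀ * Y)) D + finner (Y * (Yᵀ * G)) D)) := by
      show _ = _
      rw [show ∀ A B : Matrix (Fin n) (Fin p) ℝ, dualCLM A B = finner A B from fun _ _ => by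
        simp [finner]]
      rw [finner_sub_left, finner_smul_left, finner_smul_left, finner_add_left, finner_add_left]
    rw [ContinuousLinearMap.comp_apply, lhs, cderiv_apply]
    rw [show ∀ A B : Matrix (Fin n) (Fin p) ℝ, dualCLM A B = finner A B from fun _ _ => by
        simp [finner]]
    rw [show Y * (Yᵀ * D + Dᵀ * Y) = Y * (Yᵀ * D) + Y * (Dᵀ * Y) from Matrix.mul_add _ _ _]
    rw [show (3/2 : ℝ) • D - (1/2 : ℝ) • (Y * (Yᵀ * D) + Y * (Dᵀ * Y) + D * (Yᵀ * Y))
        = ((3/2 : ℝ) • D - (1/2 : ℝ) • (Y * (Yᵀ * D) + Y * (Dᵀ * Y) + D * (Yᵀ * Y)) : _) from rfl]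
    rw [show finner G ((3/2 : ℝ) • D - (1/2 : ℝ) • (Y * (Yᵀ * D) + Y * (Dᵀ * Y) + D * (Yᵀ * Y)))
        = (3/2) * finner G D - (1/2) * (finner G (Y * (Yᵀ * D)) + finner G (Y * (Dᵀ * Y))
            + finner G (D * (Yᵀ * Y))) from by
      rw [show finner G ((3/2 : ℝ) • D - (1/2 : ℝ) • (Y * (Yᵀ * D) + Y * (Dᵀ * Y) + D * (Yᵀ * Y)))
          = finner G ((3/2 : ℝ) • D) - finner G ((1/2 : ℝ) • (Y * (Yᵀ * D) + Y * (Dᵀ * Y) + D * (Yᵀ * Y)))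
          from by simp [finner, Matrix.mul_sub, Matrix.trace_sub]]
      rw [finner_smul_right, finner_smul_right, finner_add_right, finner_add_right]]
    have e1 : finner G (Y * (Yᵀ * D)) = finner (Y * (Yᵀ * G)) D :=
      calc finner G (Y * (Yᵀ * D)) = finner (Yᵀ * G) (Yᵀ * D) := finner_mul_left _ _ _
        _ = finner (Yᵀ * D) (Yᵀ * G) := finner_comm _ _
        _ = finner D (Y * (Yᵀ * G)) := (finner_mul_left _ _ _).symm
        _ = finner (Y * (Yᵀ * G)) D := finner_comm _ _
    have e2 : finner G (Y * (Dᵀ * Y)) = finner (Y * (Gᵀ * Y)) D :=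
      calc finner G (Y * (Dᵀ * Y)) = finner (Yᵀ * G) (Dᵀ * Y) := finner_mul_left _ _ _
        _ = finner (D * (Yᵀ * G)) Y := by
              rw [finner_mul_left, Matrix.transpose_transpose]
        _ = finner Y (D * (Yᵀ * G)) := finner_comm _ _
        _ = finner (Y * (Yᵀ * G)ᵀ) D := finner_mul_right _ _ _
        _ = finner (Y * (Gᵀ * Y)) D := by
              rw [Matrix.transpose_mul, Matrix.transpose_transpose]
    have e3 : finner G (D * (Yᵀ * Y)) = finner (G * (Yᵀ * Y)) D := by
      rw [finner_mul_right, Matrix.transpose_mul, Matrix.transpose_transpose]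
    rw [e1, e2, e3]; ring
  unfold HasGradAt
  rw [key]
  exact hg


lemma dualCLM_add (A B : Matrix (Fin n) (Fin p) ℝ) :
    dualCLM (A + B) = dualCLM A + dualCLM B := by
  ext D
  simp [Matrix.transpose_add, Matrix.add_mul]

lemma hasGradAt_pen (β : ℝ) (Y : Matrix (Fin n) (Fin p) ℝ) :
    HasGradAt (fun Z : Matrix (Fin n) (Fin p) ℝ => β / 4 * ‖Zᵀ * Z - 1‖ ^ 2) Y
      (β • (Y * (Yᵀ * Y) - Y)) := by
  have h1 : HasFDerivAt (fun Z : Matrix (Fin n) (Fin p) ℝ => Z)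
      (ContinuousLinearMap.id ℝ _) Y := hasFDerivAt_id Y
  have h2 := (h1.mtrans).matmul h1
  have h2' := h2.sub_const (1 : Matrix (Fin p) (Fin p) ℝ)
  have h3 := (h2'.mtrans).matmul h2'
  have h4 := ((traceCLM p).hasFDerivAt (x := (Yᵀ * Y - 1)ᵀ * (Yᵀ * Y - 1))).comp Y h3
  have h5 := h4.const_mul (β / 4)
  have hfe : (fun y : Matrix (Fin n) (Fin p) ℝ =>
        β / 4 * ((⇑(traceCLM p) ∘ fun y : Matrix (Fin n) (Fin p) ℝ => (yᵀ * y - 1)ᵀ * (yᵀ * y - 1)) y))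
      = fun Z : Matrix (Fin n) (Fin p) ℝ => β / 4 * ‖Zᵀ * Z - 1‖ ^ 2 := by
    funext Z
    simp only [Function.comp]
    rw [fnorm_sq]
    simp [finner]
  rw [hfe] at h5
  have key : dualCLM (β • (Y * (Yᵀ * Y) - Y)) = (β / 4) • ((traceCLM p).comp
      (mulDeriv ((transCLM p p).comp
          (mulDeriv ((transCLM n p).comp (ContinuousLinearMap.id ℝ _))
            (ContinuousLinearMap.id ℝ _) Yᵀ Y))
        (mulDeriv ((transCLM n p).comp (ContinuousLinearMap.id ℝ _))
          (ContinuousLinearMap.id ℝ _) Yᵀ Y) (Yᵀ * Y - 1)ᵀ (Yᵀ * Y - 1))) := by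
    ext D
    set W : Matrix (Fin p) (Fin p) ℝ := Yᵀ * Y - 1 with hW
    have hWs : Wᵀ = W := by
      rw [hW, Matrix.transpose_sub, Matrix.transpose_mul, Matrix.transpose_transpose,
        Matrix.transpose_one]
    have eYW : finner W (Yᵀ * D) = finner (Y * W) D := by
      rw [finner_mul_left, Matrix.transpose_transpose]
    have eDW : finner W (Dᵀ * Y) = finner (Y * W) D :=
      calc finner W (Dᵀ * Y) = finner (D * W) Y := by
            rw [finner_mul_left, Matrix.transpose_transpose]
        _ = finner Y (D * W) := finner_comm _ _
        _ = finner (Y * Wᵀ) D := finner_mul_right _ _ _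
        _ = finner (Y * W) D := by rw [hWs]
    have lhs : dualCLM (β • (Y * (Yᵀ * Y) - Y)) D = β * finner (Y * W) D := by
      rw [show dualCLM (β • (Y * (Yᵀ * Y) - Y)) D = finner (β • (Y * (Yᵀ * Y) - Y)) D from by
        simp [finner]]
      rw [finner_smul_left, hW, Matrix.mul_sub, Matrix.mul_one]
    rw [lhs]
    simp only [ContinuousLinearMap.smul_apply, ContinuousLinearMap.comp_apply,
      mulDeriv_apply, transCLM_apply, ContinuousLinearMap.id_apply, traceCLM_apply]
    rw [show (Wᵀ * (Yᵀ * D + Dᵀ * Y) + (Yᵀ * D + Dᵀ * Y)ᵀ * W).trace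
        = finner W (Yᵀ * D + Dᵀ * Y) + finner (Yᵀ * D + Dᵀ * Y) W from by
      rw [Matrix.trace_add]; unfold finner; rfl]
    rw [finner_comm (Yᵀ * D + Dᵀ * Y) W, finner_add_right, eYW, eDW, smul_eq_mul]
    ring
  unfold HasGradAt
  rw [key]
  exact h5

lemma hessian_formulas
    {gradf : Matrix (Fin n) (Fin p) ℝ → Matrix (Fin n) (Fin p) ℝ}
    (Hf : Matrix (Fin n) (Fin p) ℝ → Matrix (Fin n) (Fin p) ℝ →L[ℝ] Matrix (Fin n) (Fin p) ℝ)
    (hHf : ∀ Y, HasFDerivAt gradf (Hf Y) Y) (β : ℝ) (X : Matrix (Fin n) (Fin p) ℝ)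
    (hX : Xᵀ * X = 1) :
    ∃ Fg P : Matrix (Fin n) (Fin p) ℝ →L[ℝ] Matrix (Fin n) (Fin p) ℝ,
      HasFDerivAt (fun Y : Matrix (Fin n) (Fin p) ℝ =>
        (3/2 : ℝ) • gradf (Y * Amap Y) -
          (1/2 : ℝ) • (gradf (Y * Amap Y) * (Yᵀ * Y) +
            (Y * ((gradf (Y * Amap Y))ᵀ * Y) + Y * (Yᵀ * gradf (Y * Amap Y))))) Fg X ∧
      HasFDerivAt (fun Y : Matrix (Fin n) (Fin p) ℝ => β • (Y * (Yᵀ * Y) - Y)) P X ∧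
      (∀ D, Fg D = Hf X (D - X * Phi (Xᵀ * D)) - gradf X * Phi (Xᵀ * D)
          - D * Phi (Xᵀ * gradf X)
          - X * Phi (Xᵀ * Hf X (D - X * Phi (Xᵀ * D)))
          - X * Phi ((gradf X)ᵀ * D)) ∧
      (∀ D, P D = (2 * β) • (X * Phi (Xᵀ * D))) := by
  have hcX : X * Amap X = X := by
    rw [c_eq, hX, Matrix.mul_one]
    module
  have h1 : HasFDerivAt (fun Z : Matrix (Fin n) (Fin p) ℝ => Z)
      (ContinuousLinearMap.id ℝ _) X := hasFDerivAt_id X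
  have hc := hasFDerivAt_c X
  have hGf : HasFDerivAt gradf (Hf X) (X * Amap X) := by rw [hcX]; exact hHf X
  have hG := hGf.comp X hc
  have h2 := (h1.mtrans).matmul h1
  have he1 := hG.matmul h2
  have he2 := h1.matmul ((hG.mtrans).matmul h1)
  have he3 := h1.matmul ((h1.mtrans).matmul hG)
  have hFg := (hG.const_smul (3/2 : ℝ)).sub ((he1.add (he2.add he3)).const_smul (1/2 : ℝ))
  have hP := ((h1.matmul h2).sub h1).const_smul β
  refine ⟨_, _, hFg, hP, ?_, ?_⟩
  · intro D
    have hPhiD : ∀ D : Matrix (Fin n) (Fin p) ℝ,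
        (3/2 : ℝ) • D - (1/2 : ℝ) • (X * (Xᵀ * D + Dᵀ * X) + D) = D - X * Phi (Xᵀ * D) := by
      intro D
      rw [Phi, Matrix.mul_smul, Matrix.transpose_mul, Matrix.transpose_transpose,
        Matrix.mul_add]
      module
    change (3/2 : ℝ) • Hf X ((3/2 : ℝ) • D - (1/2 : ℝ) • (X * (Xᵀ * D + Dᵀ * X) + D * (Xᵀ * X))) - (1/2 : ℝ) • ((gradf (X * Amap X) * (Xᵀ * D + Dᵀ * X) + Hf X ((3/2 : ℝ) • D - (1/2 : ℝ) • (X * (Xᵀ * D + Dᵀ * X) + D * (Xᵀ * X))) * (Xᵀ * X))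
      + ((X * ((gradf (X * Amap X))ᵀ * D + (Hf X ((3/2 : ℝ) • D - (1/2 : ℝ) • (X * (Xᵀ * D + Dᵀ * X) + D * (Xᵀ * X))))ᵀ * X) + D * ((gradf (X * Amap X))ᵀ * X))
      + (X * (Xᵀ * Hf X ((3/2 : ℝ) • D - (1/2 : ℝ) • (X * (Xᵀ * D + Dᵀ * X) + D * (Xᵀ * X))) + Dᵀ * gradf (X * Amap X)) + D * (Xᵀ * gradf (X * Amap X))))) = _
    rw [hcX, hX]
    simp only [Matrix.mul_one]
    rw [hPhiD]
    simp only [Phi, Matrix.transpose_mul, Matrix.transpose_transpose, Matrix.transpose_smul,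
      Matrix.transpose_sub, Matrix.transpose_add, Matrix.mul_add, Matrix.add_mul,
      Matrix.mul_smul, Matrix.smul_mul, smul_add, smul_sub, Matrix.mul_sub, Matrix.sub_mul]
    module
  · intro D
    change β • (X * (Xᵀ * D + Dᵀ * X) + D * (Xᵀ * X) - D) = _
    rw [hX]
    simp only [Matrix.mul_one]
    rw [Phi, Matrix.transpose_mul, Matrix.transpose_transpose, Matrix.mul_smul,
      Matrix.mul_add]
    module

lemma HasGradAt.addG {φ ψ : Matrix (Fin n) (Fin p) ℝ → ℝ} {Y A B : Matrix (Fin n) (Fin p) ℝ}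
    (h₁ : HasGradAt φ Y A) (h₂ : HasGradAt ψ Y B) :
    HasGradAt (fun Z => φ Z + ψ Z) Y (A + B) := by
  unfold HasGradAt at *
  rw [dualCLM_add]
  exact h₁.add h₂




theorem statement_10 {n p : ℕ} (f : Matrix (Fin n) (Fin p) ℝ → ℝ) (β M₂ : ℝ)
    (gradf gradg gradh : Matrix (Fin n) (Fin p) ℝ → Matrix (Fin n) (Fin p) ℝ)
    (Hf : Matrix (Fin n) (Fin p) ℝ → Matrix (Fin n) (Fin p) ℝ →L[ℝ] Matrix (Fin n) (Fin p) ℝ)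
    (hgradf : ∀ Y, HasGradAt f Y (gradf Y))
    (hHf : ∀ Y, HasFDerivAt gradf (Hf Y) Y)
    (hHfCont : Continuous Hf)
    (hgradg : ∀ Y, HasGradAt (g f) Y (gradg Y))
    (hgradh : ∀ Y, HasGradAt (hpen f β) Y (gradh Y))
    (X : Matrix (Fin n) (Fin p) ℝ) (hX : Xᵀ * X = 1)
    (hstat : gradf X - X * Phi (Xᵀ * gradf X) = 0)
    (Hg : Matrix (Fin n) (Fin p) ℝ →L[ℝ] Matrix (Fin n) (Fin p) ℝ)
    (hHg : HasFDerivAt gradg Hg X) (hM₂ : (ContinuousLinearMap.hasOpNorm (σ₁₂ := RingHom.id ℝ)).norm Hg ≤ M₂)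
    (Hh : Matrix (Fin n) (Fin p) ℝ →L[ℝ] Matrix (Fin n) (Fin p) ℝ)
    (hHh : HasFDerivAt gradh Hh X) :
    (∀ (σ : ℝ) (D : Matrix (Fin n) (Fin p) ℝ), Phi (Dᵀ * X) = 0 → D ≠ 0 →
      ((Hf X D - D * Phi (Xᵀ * gradf X))
          - X * Phi (Xᵀ * (Hf X D - D * Phi (Xᵀ * gradf X)))) = σ • D →
      Hh D = σ • D) ∧
    (∀ σ : ℝ, (∃ D : Matrix (Fin n) (Fin p) ℝ, D ≠ 0 ∧ Hh D = σ • D) →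
      (∃ D' : Matrix (Fin n) (Fin p) ℝ, D' ≠ 0 ∧ Phi (D'ᵀ * X) = 0 ∧
        ((Hf X D' - D' * Phi (Xᵀ * gradf X))
            - X * Phi (Xᵀ * (Hf X D' - D' * Phi (Xᵀ * gradf X)))) = σ • D') ∨
      2 * β - M₂ ≤ σ) := by
  classical
  obtain ⟨Fg, P, hFg, hP, hFgD, hPD⟩ := hessian_formulas Hf hHf β X hX
  -- identify gradg and gradh
  have hggfun : gradg = fun Y => (3/2 : ℝ) • gradf (Y * Amap Y) -
      (1/2 : ℝ) • (gradf (Y * Amap Y) * (Yᵀ * Y) +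
        (Y * ((gradf (Y * Amap Y))ᵀ * Y) + Y * (Yᵀ * gradf (Y * Amap Y)))) :=
    funext fun Y => (hgradg Y).unique' (hasGradAt_g hgradf Y)
  have hghfun : gradh = fun Y => ((3/2 : ℝ) • gradf (Y * Amap Y) -
      (1/2 : ℝ) • (gradf (Y * Amap Y) * (Yᵀ * Y) +
        (Y * ((gradf (Y * Amap Y))ᵀ * Y) + Y * (Yᵀ * gradf (Y * Amap Y)))))
      + β • (Y * (Yᵀ * Y) - Y) :=
    funext fun Y => (hgradh Y).unique'
      ((hasGradAt_g hgradf Y).addG (hasGradAt_pen β Y))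
  have hHgEq : Hg = Fg := by
    refine hHg.unique ?_
    rw [hggfun]
    exact hFg
  have hHhEq : Hh = Fg + P := by
    refine hHh.unique ?_
    rw [hghfun]
    exact hFg.add hP
  set S : Matrix (Fin p) (Fin p) ℝ := Phi (Xᵀ * gradf X) with hSdef
  have hG₀ : gradf X = X * S := by
    have := sub_eq_zero.mp hstat
    rw [this]
  have hSsym : Sᵀ = S := by rw [hSdef]; exact Phi_symm _
  -- master formulas
  have hHgD : ∀ D, Hg D = Hf X (D - X * Phi (Xᵀ * D)) - gradf X * Phi (Xᵀ * D)
      - D * S - X * Phi (Xᵀ * Hf X (D - X * Phi (Xᵀ * D))) - X * Phi ((gradf X)ᵀ * D) := by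
    intro D
    rw [hHgEq]
    exact hFgD D
  have hHhD : ∀ D, Hh D = Hf X (D - X * Phi (Xᵀ * D)) - gradf X * Phi (Xᵀ * D)
      - D * S - X * Phi (Xᵀ * Hf X (D - X * Phi (Xᵀ * D))) - X * Phi ((gradf X)ᵀ * D)
      + (2 * β) • (X * Phi (Xᵀ * D)) := by
    intro D
    rw [hHhEq, ContinuousLinearMap.add_apply, hFgD D, hPD D]
  -- key skew identity
  have hkey : ∀ D : Matrix (Fin n) (Fin p) ℝ, Phi (Xᵀ * D) = 0 →
      Phi ((gradf X)ᵀ * D) = -Phi (Xᵀ * (D * S)) := by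
    intro D h0
    have hK : (Xᵀ * D)ᵀ = -(Xᵀ * D) := by
      have h2 : (Xᵀ * D) + (Xᵀ * D)ᵀ = 0 := by
        have h3 := congrArg (fun M : Matrix (Fin p) (Fin p) ℝ => (2 : ℝ) • M) h0
        simpa [Phi, smul_smul] using h3
      exact eq_neg_of_add_eq_zero_right h2
    have e1 : (gradf X)ᵀ * D = S * (Xᵀ * D) := by
      rw [hG₀, Matrix.transpose_mul, hSsym, Matrix.mul_assoc]
    have e2 : Xᵀ * (D * S) = (Xᵀ * D) * S := by rw [Matrix.mul_assoc]
    rw [e1, e2, Phi, Phi, Matrix.transpose_mul S (Xᵀ * D), Matrix.transpose_mul (Xᵀ * D) S,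
      hK, hSsym, Matrix.neg_mul, Matrix.mul_neg]
    module
  -- tangent-direction formula
  have htan : ∀ D : Matrix (Fin n) (Fin p) ℝ, Phi (Xᵀ * D) = 0 →
      Hh D = (Hf X D - D * S) - X * Phi (Xᵀ * (Hf X D - D * S)) := by
    intro D h0
    rw [hHhD D, h0, hkey D h0]
    simp only [Matrix.mul_zero, smul_zero, sub_zero, add_zero, Matrix.mul_neg,
      sub_neg_eq_add]
    rw [Matrix.mul_sub, Phi_sub, Matrix.mul_sub]
    abel
  -- tangency of Hh on tangent vectors
  have htanP : ∀ D : Matrix (Fin n) (Fin p) ℝ, Phi (Xᵀ * D) = 0 →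
      Phi (Xᵀ * Hh D) = 0 := by
    intro D h0
    rw [htan D h0, Matrix.mul_sub, Phi_sub, ← Matrix.mul_assoc, hX, Matrix.one_mul,
      Phi_Phi, sub_self]
  constructor
  · -- part (i)
    intro σ D hDt hDne heig
    have h0 : Phi (Xᵀ * D) = 0 := by
      have : Xᵀ * D = (Dᵀ * X)ᵀ := by rw [Matrix.transpose_mul, Matrix.transpose_transpose]
      rw [this, Phi_transpose, hDt, Matrix.transpose_zero]
    rw [htan D h0]
    exact heig
  · -- part (ii)
    intro σ ⟨D, hDne, heig⟩
    set S' : Matrix (Fin p) (Fin p) ℝ := Phi (Xᵀ * D) with hS'def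
    have hS'sym : S'ᵀ = S' := by rw [hS'def]; exact Phi_symm _
    have hXXS' : Xᵀ * (X * S') = S' := by rw [← Matrix.mul_assoc, hX, Matrix.one_mul]
    have hPhiS' : Phi S' = S' := Phi_of_symm hS'sym
    set Dt : Matrix (Fin n) (Fin p) ℝ := D - X * S' with hDtdef
    have htD : Phi (Xᵀ * Dt) = 0 := by
      rw [hDtdef, Matrix.mul_sub, Phi_sub, hXXS', hPhiS', ← hS'def, sub_self]
    by_cases hDt0 : Dt = 0
    · right
      have hDXS' : D = X * S' := by
        have := hDt0
        rw [hDtdef] at this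
        exact sub_eq_zero.mp this
      have hHgDval : Hg D = (σ - 2 * β) • D := by
        have h1 : Hh D = Hg D + (2 * β) • (X * Phi (Xᵀ * D)) := by
          rw [hHhD D, hHgD D]
        rw [heig, ← hS'def, ← hDXS'] at h1
        have : Hg D = σ • D - (2 * β) • D := by
          rw [eq_comm, sub_eq_iff_eq_add]
          linear_combination (norm := module) h1
        rw [this, sub_smul]
      have hDpos : (0 : ℝ) < ‖D‖ := norm_pos_iff.mpr hDne
      have hb : ‖Hg D‖ ≤ M₂ * ‖D‖ := by
        calc ‖Hg D‖ ≤ (ContinuousLinearMap.hasOpNorm (σ₁₂ := RingHom.id ℝ)).norm Hg * ‖D‖ := Hg.le_opNorm D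
          _ ≤ M₂ * ‖D‖ := by
              apply mul_le_mul_of_nonneg_right hM₂ (norm_nonneg D)
      rw [hHgDval, norm_smul, Real.norm_eq_abs] at hb
      have habs : |σ - 2 * β| ≤ M₂ := le_of_mul_le_mul_right hb hDpos
      have := neg_abs_le (σ - 2 * β)
      linarith [abs_le.mp habs]
    · left
      -- compute Hh (X * S')
      set S'' : Matrix (Fin p) (Fin p) ℝ :=
        -(S * S') - S' * S - Phi (S * S') + (2 * β) • S' with hS''def
      have hS''sym : S''ᵀ = S'' := by
        rw [hS''def]
        rw [Matrix.transpose_add, Matrix.transpose_sub, Matrix.transpose_sub,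
          Matrix.transpose_neg, Matrix.transpose_smul, Phi_symm,
          Matrix.transpose_mul S S', Matrix.transpose_mul S' S, hSsym, hS'sym]
        abel
      have hnorm : Hh (X * S') = X * S'' := by
        rw [hHhD (X * S'), hXXS', hPhiS']
        rw [show X * S' - X * S' = 0 from sub_self _, map_zero, Matrix.mul_zero, Phi_zero,
          Matrix.mul_zero]
        have e3 : (gradf X)ᵀ * (X * S') = S * S' := by
          rw [hG₀, Matrix.transpose_mul, hSsym, Matrix.mul_assoc, hXXS']
        rw [e3, hG₀, hS''def]
        rw [Matrix.mul_add, Matrix.mul_sub, Matrix.mul_sub, Matrix.mul_neg,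
          ← Matrix.mul_assoc, ← Matrix.mul_assoc, Matrix.mul_smul]
        abel
      have hsplit : Hh D = Hh Dt + Hh (X * S') := by
        rw [show D = Dt + X * S' from by rw [hDtdef]; abel, map_add]
      -- project the eigen-equation
      have hS''val : S'' = σ • S' := by
        have h4 : σ • D = Hh Dt + X * S'' := by rw [← heig, hsplit, hnorm]
        have h5 := congrArg (fun W => Phi (Xᵀ * W)) h4
        rw [Matrix.mul_add, Phi_add, htanP Dt htD, ← Matrix.mul_assoc, hX,
          Matrix.one_mul, Phi_of_symm hS''sym, Matrix.mul_smul, Phi_smul, ← hS'def,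
          zero_add] at h5
        exact h5.symm
      have hHhDt : Hh Dt = σ • Dt := by
        have h6 : Hh Dt = σ • D - X * S'' := by
          rw [eq_sub_iff_add_eq, ← hnorm, ← hsplit, heig]
        rw [h6, hS''val, Matrix.mul_smul, hDtdef, smul_sub]
      refine ⟨Dt, hDt0, ?_, ?_⟩
      · have : Dtᵀ * X = (Xᵀ * Dt)ᵀ := by
          rw [Matrix.transpose_mul, Matrix.transpose_transpose]
        rw [this, Phi_transpose, htD, Matrix.transpose_zero]
      · rw [← htan Dt htD]
        exact hHhDt


end ExPen
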